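/- The 22×22 Gram matrix (B(w_i, w_j))_{1≤i,j≤22} of the vectors w_1,…,w_22 equals the block-diagonal matrix E8(−1) ⊕ E8(−1) ⊕ H ⊕ H ⊕ H (with the blocks occupying indices 1–8, 9–16, 17–18, 19–20, 21–22 respectively). -/

import Mathlib

open Matrix

/-- `V = ℚ²²`, with basis vectors indexed so that indices `0,…,15` correspond to
`L_1,…,L_16` and indices `16,…,21` to `T_12, T_13, T_14, T_23, T_24, T_34`. -/
abbrev V : Type := Fin 22 → ℚ

/-- The `i`-th standard basis vector of `V`. -/
def e (i : Fin 22) : V := Pi.single i 1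

/-- `L n` is the basis vector `L_{n+1}` (0-indexed: `L 0 = L_1`, …, `L 15 = L_16`). -/
def L (n : Fin 16) : V := e (Fin.castLE (by norm_num) n)

def T12 : V := e 16
def T13 : V := e 17
def T14 : V := e 18
def T23 : V := e 19
def T24 : V := e 20
def T34 : V := e 21

/-- The Gram matrix, in the basis `L_1,…,L_16,T_12,T_13,T_14,T_23,T_24,T_34`, of the
symmetric bilinear form determined by `B(L_i,L_j) = -2δ_ij`, `B(L_i,T_pq) = 0`,
`B(T_12,T_34) = B(T_14,T_23) = 2`, `B(T_13,T_24) = -2`, and all other products of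
distinct `T`-basis vectors equal to `0`. -/
def gram : Matrix (Fin 22) (Fin 22) ℚ :=
  Matrix.of fun i j =>
    if i.1 < 16 ∨ j.1 < 16 then (if i = j then -2 else 0)
    else if i.1 + j.1 = 37 then (if i.1 = 17 ∨ i.1 = 20 then -2 else 2)
    else 0

/-- The symmetric bilinear form `B` on `V` with the Gram matrix `gram`. -/
def B (v w : V) : ℚ := v ⬝ᵥ gram.mulVec w

/- The vectors `w_1,…,w_22` (here named `w1,…,w22`); recall `L 0 = L_1`, etc. -/
def w1 : V := (1 / 2 : ℚ) • (L 0 - L 2 - L 4 - L 6) - (1 / 2 : ℚ) • T12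
def w2 : V := (1 / 2 : ℚ) • (L 0 + L 1 + L 4 + L 5) - (1 / 2 : ℚ) • (T13 + T23)
def w3 : V := (1 / 2 : ℚ) • (-L 0 - L 1 + L 4 + L 5) + (1 / 2 : ℚ) • (T13 + T23)
def w4 : V := -L 5
def w5 : V := (1 / 2 : ℚ) • (L 2 + L 3 - L 4 + L 5) - (1 / 2 : ℚ) • T23
def w6 : V := -L 3
def w7 : V := (1 / 2 : ℚ) • (-L 2 + L 3 + L 6 + L 7) - (1 / 2 : ℚ) • (T13 - T23)
def w8 : V := -L 7
def w9 : V := (1 / 2 : ℚ) • (L 8 - L 10 - L 12 - L 14) - (1 / 2 : ℚ) • T12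
def w10 : V := (1 / 2 : ℚ) • (L 8 + L 9 + L 12 + L 13) - (1 / 2 : ℚ) • (T13 + T23)
def w11 : V := (1 / 2 : ℚ) • (-L 8 - L 9 + L 12 + L 13) + (1 / 2 : ℚ) • (T13 + T23)
def w12 : V := -L 13
def w13 : V := (1 / 2 : ℚ) • (L 10 + L 11 - L 12 + L 13) - (1 / 2 : ℚ) • T23
def w14 : V := -L 11
def w15 : V := (1 / 2 : ℚ) • (-L 10 + L 11 + L 14 + L 15) - (1 / 2 : ℚ) • (T13 - T23)
def w16 : V := -L 15
def w17 : V := T12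
def w19 : V := T13
def w21 : V := T23
def w18' : V := -(1 / 2 : ℚ) • (L 0 - L 1 + L 8 - L 9) + (1 / 2 : ℚ) • T34
def w20' : V := -(1 / 2 : ℚ) • (L 0 + L 6 + L 8 + L 14) - (1 / 2 : ℚ) • T24
def w22' : V := -(1 / 2 : ℚ) • (L 0 + L 2 + L 8 + L 10) + (1 / 2 : ℚ) • T14
def w18 : V := w18' + w17
def w20 : V := w20' + w17 + w19
def w22 : V := w22' + w17 + w19 + w21

/-- The family `w_1,…,w_22` (0-indexed: `w 0 = w_1`, …, `w 21 = w_22`). -/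
def w : Fin 22 → V :=
  ![w1, w2, w3, w4, w5, w6, w7, w8, w9, w10, w11, w12, w13, w14, w15, w16,
    w17, w18, w19, w20, w21, w22]

/-- The matrix `E8(-1)`. -/
def E8neg : Matrix (Fin 8) (Fin 8) ℚ :=
  -(!![2, 0, -1, 0, 0, 0, 0, 0;
       0, 2, 0, -1, 0, 0, 0, 0;
       -1, 0, 2, -1, 0, 0, 0, 0;
       0, -1, -1, 2, -1, 0, 0, 0;
       0, 0, 0, -1, 2, -1, 0, 0;
       0, 0, 0, 0, -1, 2, -1, 0;
       0, 0, 0, 0, 0, -1, 2, -1;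
       0, 0, 0, 0, 0, 0, -1, 2])

/-- The block-diagonal matrix `E8(-1) ⊕ E8(-1) ⊕ H ⊕ H ⊕ H`, the blocks occupying
indices 0–7, 8–15, 16–17, 18–19, 20–21 (0-indexed), where `H = !![0,1;1,0]`. -/
def Qcan : Matrix (Fin 22) (Fin 22) ℚ :=
  Matrix.of fun i j =>
    if h : i.1 < 8 ∧ j.1 < 8 then E8neg ⟨i.1, h.1⟩ ⟨j.1, h.2⟩
    else if h2 : 8 ≤ i.1 ∧ i.1 < 16 ∧ 8 ≤ j.1 ∧ j.1 < 16 then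
      E8neg ⟨i.1 - 8, by omega⟩ ⟨j.1 - 8, by omega⟩
    else if (i.1 = 16 ∧ j.1 = 17) ∨ (i.1 = 17 ∧ j.1 = 16) ∨
            (i.1 = 18 ∧ j.1 = 19) ∨ (i.1 = 19 ∧ j.1 = 18) ∨
            (i.1 = 20 ∧ j.1 = 21) ∨ (i.1 = 21 ∧ j.1 = 20) then 1
    else 0


set_option maxHeartbeats 1000000
set_option linter.unreachableTactic false
set_option linter.unusedTactic false
set_option linter.unnecessarySeqFocus false

lemma B_e_e (i j : Fin 22) : B (e i) (e j) = gram i j := by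
  simp [B, e, Matrix.mulVec_single, single_dotProduct]

lemma B_add_left (x y z : V) : B (x + y) z = B x z + B y z := by
  simp [B, add_dotProduct]
lemma B_add_right (x y z : V) : B x (y + z) = B x y + B x z := by
  simp [B, Matrix.mulVec_add, dotProduct_add]
lemma B_smul_left (a : ℚ) (x z : V) : B (a • x) z = a * B x z := by
  simp [B, smul_dotProduct]
lemma B_smul_right (a : ℚ) (x z : V) : B x (a • z) = a * B x z := by
  simp [B, Matrix.mulVec_smul, dotProduct_smul, smul_eq_mul]
lemma B_neg_left (x z : V) : B (-x) z = -B x z := by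
  simp [B, neg_dotProduct]
lemma B_neg_right (x z : V) : B x (-z) = -B x z := by
  simp [B, Matrix.mulVec_neg, dotProduct_neg]
lemma B_sub_left (x y z : V) : B (x - y) z = B x z - B y z := by
  simp [sub_eq_add_neg, B_add_left, B_neg_left]
lemma B_sub_right (x y z : V) : B x (y - z) = B x y - B x z := by
  simp [sub_eq_add_neg, B_add_right, B_neg_right]

lemma B_L_L (m n : Fin 16) : B (L m) (L n) = if m = n then -2 else 0 := by
  rw [L, L, B_e_e]
  simp [_root_.gram, Fin.castLE, Fin.ext_iff]

@[simp] lemma val16 : (((16 : Fin 22)) : ℕ) = 16 := rfl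

@[simp] lemma val17 : (((17 : Fin 22)) : ℕ) = 17 := rfl

@[simp] lemma val18 : (((18 : Fin 22)) : ℕ) = 18 := rfl

@[simp] lemma val19 : (((19 : Fin 22)) : ℕ) = 19 := rfl

@[simp] lemma val20 : (((20 : Fin 22)) : ℕ) = 20 := rfl

@[simp] lemma val21 : (((21 : Fin 22)) : ℕ) = 21 := rfl

lemma B_L_T12 (m : Fin 16) : B (L m) T12 = 0 := by
  simp only [L, T12]; rw [B_e_e]; simp [_root_.gram, Fin.ext_iff, Fin.castLE]; omega

lemma B_T12_L (m : Fin 16) : B T12 (L m) = 0 := by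
  simp only [L, T12]; rw [B_e_e]; simp [_root_.gram, Fin.ext_iff, Fin.castLE]; omega

lemma B_L_T13 (m : Fin 16) : B (L m) T13 = 0 := by
  simp only [L, T13]; rw [B_e_e]; simp [_root_.gram, Fin.ext_iff, Fin.castLE]; omega

lemma B_T13_L (m : Fin 16) : B T13 (L m) = 0 := by
  simp only [L, T13]; rw [B_e_e]; simp [_root_.gram, Fin.ext_iff, Fin.castLE]; omega

lemma B_L_T14 (m : Fin 16) : B (L m) T14 = 0 := by
  simp only [L, T14]; rw [B_e_e]; simp [_root_.gram, Fin.ext_iff, Fin.castLE]; omega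

lemma B_T14_L (m : Fin 16) : B T14 (L m) = 0 := by
  simp only [L, T14]; rw [B_e_e]; simp [_root_.gram, Fin.ext_iff, Fin.castLE]; omega

lemma B_L_T23 (m : Fin 16) : B (L m) T23 = 0 := by
  simp only [L, T23]; rw [B_e_e]; simp [_root_.gram, Fin.ext_iff, Fin.castLE]; omega

lemma B_T23_L (m : Fin 16) : B T23 (L m) = 0 := by
  simp only [L, T23]; rw [B_e_e]; simp [_root_.gram, Fin.ext_iff, Fin.castLE]; omega

lemma B_L_T24 (m : Fin 16) : B (L m) T24 = 0 := by
  simp only [L, T24]; rw [B_e_e]; simp [_root_.gram, Fin.ext_iff, Fin.castLE]; omega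

lemma B_T24_L (m : Fin 16) : B T24 (L m) = 0 := by
  simp only [L, T24]; rw [B_e_e]; simp [_root_.gram, Fin.ext_iff, Fin.castLE]; omega

lemma B_L_T34 (m : Fin 16) : B (L m) T34 = 0 := by
  simp only [L, T34]; rw [B_e_e]; simp [_root_.gram, Fin.ext_iff, Fin.castLE]; omega

lemma B_T34_L (m : Fin 16) : B T34 (L m) = 0 := by
  simp only [L, T34]; rw [B_e_e]; simp [_root_.gram, Fin.ext_iff, Fin.castLE]; omega

lemma B_T12_T12 : B T12 T12 = 0 := by
  simp only [T12, T12]; rw [B_e_e]; norm_num [_root_.gram, Fin.ext_iff]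

lemma B_T12_T13 : B T12 T13 = 0 := by
  simp only [T12, T13]; rw [B_e_e]; norm_num [_root_.gram, Fin.ext_iff]

lemma B_T12_T14 : B T12 T14 = 0 := by
  simp only [T12, T14]; rw [B_e_e]; norm_num [_root_.gram, Fin.ext_iff]

lemma B_T12_T23 : B T12 T23 = 0 := by
  simp only [T12, T23]; rw [B_e_e]; norm_num [_root_.gram, Fin.ext_iff]

lemma B_T12_T24 : B T12 T24 = 0 := by
  simp only [T12, T24]; rw [B_e_e]; norm_num [_root_.gram, Fin.ext_iff]

lemma B_T12_T34 : B T12 T34 = 2 := by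
  simp only [T12, T34]; rw [B_e_e]; norm_num [_root_.gram, Fin.ext_iff]

lemma B_T13_T12 : B T13 T12 = 0 := by
  simp only [T13, T12]; rw [B_e_e]; norm_num [_root_.gram, Fin.ext_iff]

lemma B_T13_T13 : B T13 T13 = 0 := by
  simp only [T13, T13]; rw [B_e_e]; norm_num [_root_.gram, Fin.ext_iff]

lemma B_T13_T14 : B T13 T14 = 0 := by
  simp only [T13, T14]; rw [B_e_e]; norm_num [_root_.gram, Fin.ext_iff]

lemma B_T13_T23 : B T13 T23 = 0 := by
  simp only [T13, T23]; rw [B_e_e]; norm_num [_root_.gram, Fin.ext_iff]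

lemma B_T13_T24 : B T13 T24 = -2 := by
  simp only [T13, T24]; rw [B_e_e]; norm_num [_root_.gram, Fin.ext_iff]

lemma B_T13_T34 : B T13 T34 = 0 := by
  simp only [T13, T34]; rw [B_e_e]; norm_num [_root_.gram, Fin.ext_iff]

lemma B_T14_T12 : B T14 T12 = 0 := by
  simp only [T14, T12]; rw [B_e_e]; norm_num [_root_.gram, Fin.ext_iff]

lemma B_T14_T13 : B T14 T13 = 0 := by
  simp only [T14, T13]; rw [B_e_e]; norm_num [_root_.gram, Fin.ext_iff]

lemma B_T14_T14 : B T14 T14 = 0 := by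
  simp only [T14, T14]; rw [B_e_e]; norm_num [_root_.gram, Fin.ext_iff]

lemma B_T14_T23 : B T14 T23 = 2 := by
  simp only [T14, T23]; rw [B_e_e]; norm_num [_root_.gram, Fin.ext_iff]

lemma B_T14_T24 : B T14 T24 = 0 := by
  simp only [T14, T24]; rw [B_e_e]; norm_num [_root_.gram, Fin.ext_iff]

lemma B_T14_T34 : B T14 T34 = 0 := by
  simp only [T14, T34]; rw [B_e_e]; norm_num [_root_.gram, Fin.ext_iff]

lemma B_T23_T12 : B T23 T12 = 0 := by
  simp only [T23, T12]; rw [B_e_e]; norm_num [_root_.gram, Fin.ext_iff]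

lemma B_T23_T13 : B T23 T13 = 0 := by
  simp only [T23, T13]; rw [B_e_e]; norm_num [_root_.gram, Fin.ext_iff]

lemma B_T23_T14 : B T23 T14 = 2 := by
  simp only [T23, T14]; rw [B_e_e]; norm_num [_root_.gram, Fin.ext_iff]

lemma B_T23_T23 : B T23 T23 = 0 := by
  simp only [T23, T23]; rw [B_e_e]; norm_num [_root_.gram, Fin.ext_iff]

lemma B_T23_T24 : B T23 T24 = 0 := by
  simp only [T23, T24]; rw [B_e_e]; norm_num [_root_.gram, Fin.ext_iff]

lemma B_T23_T34 : B T23 T34 = 0 := by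
  simp only [T23, T34]; rw [B_e_e]; norm_num [_root_.gram, Fin.ext_iff]

lemma B_T24_T12 : B T24 T12 = 0 := by
  simp only [T24, T12]; rw [B_e_e]; norm_num [_root_.gram, Fin.ext_iff]

lemma B_T24_T13 : B T24 T13 = -2 := by
  simp only [T24, T13]; rw [B_e_e]; norm_num [_root_.gram, Fin.ext_iff]

lemma B_T24_T14 : B T24 T14 = 0 := by
  simp only [T24, T14]; rw [B_e_e]; norm_num [_root_.gram, Fin.ext_iff]

lemma B_T24_T23 : B T24 T23 = 0 := by
  simp only [T24, T23]; rw [B_e_e]; norm_num [_root_.gram, Fin.ext_iff]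

lemma B_T24_T24 : B T24 T24 = 0 := by
  simp only [T24, T24]; rw [B_e_e]; norm_num [_root_.gram, Fin.ext_iff]

lemma B_T24_T34 : B T24 T34 = 0 := by
  simp only [T24, T34]; rw [B_e_e]; norm_num [_root_.gram, Fin.ext_iff]

lemma B_T34_T12 : B T34 T12 = 2 := by
  simp only [T34, T12]; rw [B_e_e]; norm_num [_root_.gram, Fin.ext_iff]

lemma B_T34_T13 : B T34 T13 = 0 := by
  simp only [T34, T13]; rw [B_e_e]; norm_num [_root_.gram, Fin.ext_iff]

lemma B_T34_T14 : B T34 T14 = 0 := by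
  simp only [T34, T14]; rw [B_e_e]; norm_num [_root_.gram, Fin.ext_iff]

lemma B_T34_T23 : B T34 T23 = 0 := by
  simp only [T34, T23]; rw [B_e_e]; norm_num [_root_.gram, Fin.ext_iff]

lemma B_T34_T24 : B T34 T24 = 0 := by
  simp only [T34, T24]; rw [B_e_e]; norm_num [_root_.gram, Fin.ext_iff]

lemma B_T34_T34 : B T34 T34 = 0 := by
  simp only [T34, T34]; rw [B_e_e]; norm_num [_root_.gram, Fin.ext_iff]

attribute [simp] B_sub_left B_sub_right B_add_left B_add_right B_smul_left B_smul_right B_neg_left B_neg_right B_L_L B_L_T12 B_T12_L B_L_T13 B_T13_L B_L_T14 B_T14_L B_L_T23 B_T23_L B_L_T24 B_T24_L B_L_T34 B_T34_L B_T12_T12 B_T12_T13 B_T12_T14 B_T12_T23 B_T12_T24 B_T12_T34 B_T13_T12 B_T13_T13 B_T13_T14 B_T13_T23 B_T13_T24 B_T13_T34 B_T14_T12 B_T14_T13 B_T14_T14 B_T14_T23 B_T14_T24 B_T14_T34 B_T23_T12 B_T23_T13 B_T23_T14 B_T23_T23 B_T23_T24 B_T23_T34 B_T24_T12 B_T24_T13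 B_T24_T14 B_T24_T23 B_T24_T24 B_T24_T34 B_T34_T12 B_T34_T13 B_T34_T14 B_T34_T23 B_T34_T24 B_T34_T34

lemma gram_symm : ∀ i j : Fin 22, gram i j = gram j i := by
  intro ⟨i,hi⟩ ⟨j,hj⟩
  simp only [_root_.gram, Matrix.of_apply, Fin.mk.injEq]
  split_ifs <;> first | rfl | omega
lemma B_comm (x y : V) : B x y = B y x := by
  have h : _root_.gramᵀ = _root_.gram := by
    ext i j; rw [Matrix.transpose_apply]; exact gram_symm j i
  rw [B, B, Matrix.dotProduct_mulVec, ← h, Matrix.vecMul_transpose,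
    dotProduct_comm, h]

lemma g_0_0 : B w1 w1 = -2 := by
  simp [w1] <;> norm_num

lemma g_0_1 : B w1 w2 = 0 := by
  simp [w1, w2] <;> norm_num

lemma g_0_2 : B w1 w3 = 1 := by
  simp [w1, w3] <;> norm_num

lemma g_0_3 : B w1 w4 = 0 := by
  simp [w1, w4] <;> norm_num

lemma g_0_4 : B w1 w5 = 0 := by
  simp [w1, w5] <;> norm_num

lemma g_0_5 : B w1 w6 = 0 := by
  simp [w1, w6] <;> norm_num

lemma g_0_6 : B w1 w7 = 0 := by
  simp [w1, w7] <;> norm_num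

lemma g_0_7 : B w1 w8 = 0 := by
  simp [w1, w8] <;> norm_num

lemma g_0_8 : B w1 w9 = 0 := by
  simp [w1, w9] <;> norm_num

lemma g_0_9 : B w1 w10 = 0 := by
  simp [w1, w10] <;> norm_num

lemma g_0_10 : B w1 w11 = 0 := by
  simp [w1, w11] <;> norm_num

lemma g_0_11 : B w1 w12 = 0 := by
  simp [w1, w12] <;> norm_num

lemma g_0_12 : B w1 w13 = 0 := by
  simp [w1, w13] <;> norm_num

lemma g_0_13 : B w1 w14 = 0 := by
  simp [w1, w14] <;> norm_num

lemma g_0_14 : B w1 w15 = 0 := by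
  simp [w1, w15] <;> norm_num

lemma g_0_15 : B w1 w16 = 0 := by
  simp [w1, w16] <;> norm_num

lemma g_0_16 : B w1 w17 = 0 := by
  simp [w1, w17] <;> norm_num

lemma g_0_17 : B w1 w18 = 0 := by
  simp [w1, w17, w18, w18'] <;> norm_num

lemma g_0_18 : B w1 w19 = 0 := by
  simp [w1, w19] <;> norm_num

lemma g_0_19 : B w1 w20 = 0 := by
  simp [w1, w17, w19, w20, w20'] <;> norm_num

lemma g_0_20 : B w1 w21 = 0 := by
  simp [w1, w21] <;> norm_num

lemma g_0_21 : B w1 w22 = 0 := by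
  simp [w1, w17, w19, w21, w22, w22'] <;> norm_num

lemma g_1_1 : B w2 w2 = -2 := by
  simp [w2] <;> norm_num

lemma g_1_2 : B w2 w3 = 0 := by
  simp [w2, w3] <;> norm_num

lemma g_1_3 : B w2 w4 = 1 := by
  simp [w2, w4] <;> norm_num

lemma g_1_4 : B w2 w5 = 0 := by
  simp [w2, w5] <;> norm_num

lemma g_1_5 : B w2 w6 = 0 := by
  simp [w2, w6] <;> norm_num

lemma g_1_6 : B w2 w7 = 0 := by
  simp [w2, w7] <;> norm_num

lemma g_1_7 : B w2 w8 = 0 := by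
  simp [w2, w8] <;> norm_num

lemma g_1_8 : B w2 w9 = 0 := by
  simp [w2, w9] <;> norm_num

lemma g_1_9 : B w2 w10 = 0 := by
  simp [w10, w2] <;> norm_num

lemma g_1_10 : B w2 w11 = 0 := by
  simp [w11, w2] <;> norm_num

lemma g_1_11 : B w2 w12 = 0 := by
  simp [w12, w2] <;> norm_num

lemma g_1_12 : B w2 w13 = 0 := by
  simp [w13, w2] <;> norm_num

lemma g_1_13 : B w2 w14 = 0 := by
  simp [w14, w2] <;> norm_num

lemma g_1_14 : B w2 w15 = 0 := by
  simp [w15, w2] <;> norm_num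

lemma g_1_15 : B w2 w16 = 0 := by
  simp [w16, w2] <;> norm_num

lemma g_1_16 : B w2 w17 = 0 := by
  simp [w17, w2] <;> norm_num

lemma g_1_17 : B w2 w18 = 0 := by
  simp [w17, w18, w18', w2] <;> norm_num

lemma g_1_18 : B w2 w19 = 0 := by
  simp [w19, w2] <;> norm_num

lemma g_1_19 : B w2 w20 = 0 := by
  simp [w17, w19, w2, w20, w20'] <;> norm_num

lemma g_1_20 : B w2 w21 = 0 := by
  simp [w2, w21] <;> norm_num

lemma g_1_21 : B w2 w22 = 0 := by
  simp [w17, w19, w2, w21, w22, w22'] <;> norm_num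

lemma g_2_2 : B w3 w3 = -2 := by
  simp [w3] <;> norm_num

lemma g_2_3 : B w3 w4 = 1 := by
  simp [w3, w4] <;> norm_num

lemma g_2_4 : B w3 w5 = 0 := by
  simp [w3, w5] <;> norm_num

lemma g_2_5 : B w3 w6 = 0 := by
  simp [w3, w6] <;> norm_num

lemma g_2_6 : B w3 w7 = 0 := by
  simp [w3, w7] <;> norm_num

lemma g_2_7 : B w3 w8 = 0 := by
  simp [w3, w8] <;> norm_num

lemma g_2_8 : B w3 w9 = 0 := by
  simp [w3, w9] <;> norm_num

lemma g_2_9 : B w3 w10 = 0 := by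
  simp [w10, w3] <;> norm_num

lemma g_2_10 : B w3 w11 = 0 := by
  simp [w11, w3] <;> norm_num

lemma g_2_11 : B w3 w12 = 0 := by
  simp [w12, w3] <;> norm_num

lemma g_2_12 : B w3 w13 = 0 := by
  simp [w13, w3] <;> norm_num

lemma g_2_13 : B w3 w14 = 0 := by
  simp [w14, w3] <;> norm_num

lemma g_2_14 : B w3 w15 = 0 := by
  simp [w15, w3] <;> norm_num

lemma g_2_15 : B w3 w16 = 0 := by
  simp [w16, w3] <;> norm_num

lemma g_2_16 : B w3 w17 = 0 := by
  simp [w17, w3] <;> norm_num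

lemma g_2_17 : B w3 w18 = 0 := by
  simp [w17, w18, w18', w3] <;> norm_num

lemma g_2_18 : B w3 w19 = 0 := by
  simp [w19, w3] <;> norm_num

lemma g_2_19 : B w3 w20 = 0 := by
  simp [w17, w19, w20, w20', w3] <;> norm_num

lemma g_2_20 : B w3 w21 = 0 := by
  simp [w21, w3] <;> norm_num

lemma g_2_21 : B w3 w22 = 0 := by
  simp [w17, w19, w21, w22, w22', w3] <;> norm_num

lemma g_3_3 : B w4 w4 = -2 := by
  simp [w4] <;> norm_num

lemma g_3_4 : B w4 w5 = 1 := by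
  simp [w4, w5] <;> norm_num

lemma g_3_5 : B w4 w6 = 0 := by
  simp [w4, w6] <;> norm_num

lemma g_3_6 : B w4 w7 = 0 := by
  simp [w4, w7] <;> norm_num

lemma g_3_7 : B w4 w8 = 0 := by
  simp [w4, w8] <;> norm_num

lemma g_3_8 : B w4 w9 = 0 := by
  simp [w4, w9] <;> norm_num

lemma g_3_9 : B w4 w10 = 0 := by
  simp [w10, w4] <;> norm_num

lemma g_3_10 : B w4 w11 = 0 := by
  simp [w11, w4] <;> norm_num

lemma g_3_11 : B w4 w12 = 0 := by
  simp [w12, w4] <;> norm_num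

lemma g_3_12 : B w4 w13 = 0 := by
  simp [w13, w4] <;> norm_num

lemma g_3_13 : B w4 w14 = 0 := by
  simp [w14, w4] <;> norm_num

lemma g_3_14 : B w4 w15 = 0 := by
  simp [w15, w4] <;> norm_num

lemma g_3_15 : B w4 w16 = 0 := by
  simp [w16, w4] <;> norm_num

lemma g_3_16 : B w4 w17 = 0 := by
  simp [w17, w4] <;> norm_num

lemma g_3_17 : B w4 w18 = 0 := by
  simp [w17, w18, w18', w4] <;> norm_num

lemma g_3_18 : B w4 w19 = 0 := by
  simp [w19, w4] <;> norm_num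

lemma g_3_19 : B w4 w20 = 0 := by
  simp [w17, w19, w20, w20', w4] <;> norm_num

lemma g_3_20 : B w4 w21 = 0 := by
  simp [w21, w4] <;> norm_num

lemma g_3_21 : B w4 w22 = 0 := by
  simp [w17, w19, w21, w22, w22', w4] <;> norm_num

lemma g_4_4 : B w5 w5 = -2 := by
  simp [w5] <;> norm_num

lemma g_4_5 : B w5 w6 = 1 := by
  simp [w5, w6] <;> norm_num

lemma g_4_6 : B w5 w7 = 0 := by
  simp [w5, w7] <;> norm_num

lemma g_4_7 : B w5 w8 = 0 := by
  simp [w5, w8] <;> norm_num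

lemma g_4_8 : B w5 w9 = 0 := by
  simp [w5, w9] <;> norm_num

lemma g_4_9 : B w5 w10 = 0 := by
  simp [w10, w5] <;> norm_num

lemma g_4_10 : B w5 w11 = 0 := by
  simp [w11, w5] <;> norm_num

lemma g_4_11 : B w5 w12 = 0 := by
  simp [w12, w5] <;> norm_num

lemma g_4_12 : B w5 w13 = 0 := by
  simp [w13, w5] <;> norm_num

lemma g_4_13 : B w5 w14 = 0 := by
  simp [w14, w5] <;> norm_num

lemma g_4_14 : B w5 w15 = 0 := by
  simp [w15, w5] <;> norm_num

lemma g_4_15 : B w5 w16 = 0 := by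
  simp [w16, w5] <;> norm_num

lemma g_4_16 : B w5 w17 = 0 := by
  simp [w17, w5] <;> norm_num

lemma g_4_17 : B w5 w18 = 0 := by
  simp [w17, w18, w18', w5] <;> norm_num

lemma g_4_18 : B w5 w19 = 0 := by
  simp [w19, w5] <;> norm_num

lemma g_4_19 : B w5 w20 = 0 := by
  simp [w17, w19, w20, w20', w5] <;> norm_num

lemma g_4_20 : B w5 w21 = 0 := by
  simp [w21, w5] <;> norm_num

lemma g_4_21 : B w5 w22 = 0 := by
  simp [w17, w19, w21, w22, w22', w5] <;> norm_num

lemma g_5_5 : B w6 w6 = -2 := by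
  simp [w6] <;> norm_num

lemma g_5_6 : B w6 w7 = 1 := by
  simp [w6, w7] <;> norm_num

lemma g_5_7 : B w6 w8 = 0 := by
  simp [w6, w8] <;> norm_num

lemma g_5_8 : B w6 w9 = 0 := by
  simp [w6, w9] <;> norm_num

lemma g_5_9 : B w6 w10 = 0 := by
  simp [w10, w6] <;> norm_num

lemma g_5_10 : B w6 w11 = 0 := by
  simp [w11, w6] <;> norm_num

lemma g_5_11 : B w6 w12 = 0 := by
  simp [w12, w6] <;> norm_num

lemma g_5_12 : B w6 w13 = 0 := by
  simp [w13, w6] <;> norm_num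

lemma g_5_13 : B w6 w14 = 0 := by
  simp [w14, w6] <;> norm_num

lemma g_5_14 : B w6 w15 = 0 := by
  simp [w15, w6] <;> norm_num

lemma g_5_15 : B w6 w16 = 0 := by
  simp [w16, w6] <;> norm_num

lemma g_5_16 : B w6 w17 = 0 := by
  simp [w17, w6] <;> norm_num

lemma g_5_17 : B w6 w18 = 0 := by
  simp [w17, w18, w18', w6] <;> norm_num

lemma g_5_18 : B w6 w19 = 0 := by
  simp [w19, w6] <;> norm_num

lemma g_5_19 : B w6 w20 = 0 := by
  simp [w17, w19, w20, w20', w6] <;> norm_num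

lemma g_5_20 : B w6 w21 = 0 := by
  simp [w21, w6] <;> norm_num

lemma g_5_21 : B w6 w22 = 0 := by
  simp [w17, w19, w21, w22, w22', w6] <;> norm_num

lemma g_6_6 : B w7 w7 = -2 := by
  simp [w7] <;> norm_num

lemma g_6_7 : B w7 w8 = 1 := by
  simp [w7, w8] <;> norm_num

lemma g_6_8 : B w7 w9 = 0 := by
  simp [w7, w9] <;> norm_num

lemma g_6_9 : B w7 w10 = 0 := by
  simp [w10, w7] <;> norm_num

lemma g_6_10 : B w7 w11 = 0 := by
  simp [w11, w7] <;> norm_num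

lemma g_6_11 : B w7 w12 = 0 := by
  simp [w12, w7] <;> norm_num

lemma g_6_12 : B w7 w13 = 0 := by
  simp [w13, w7] <;> norm_num

lemma g_6_13 : B w7 w14 = 0 := by
  simp [w14, w7] <;> norm_num

lemma g_6_14 : B w7 w15 = 0 := by
  simp [w15, w7] <;> norm_num

lemma g_6_15 : B w7 w16 = 0 := by
  simp [w16, w7] <;> norm_num

lemma g_6_16 : B w7 w17 = 0 := by
  simp [w17, w7] <;> norm_num

lemma g_6_17 : B w7 w18 = 0 := by
  simp [w17, w18, w18', w7] <;> norm_num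

lemma g_6_18 : B w7 w19 = 0 := by
  simp [w19, w7] <;> norm_num

lemma g_6_19 : B w7 w20 = 0 := by
  simp [w17, w19, w20, w20', w7] <;> norm_num

lemma g_6_20 : B w7 w21 = 0 := by
  simp [w21, w7] <;> norm_num

lemma g_6_21 : B w7 w22 = 0 := by
  simp [w17, w19, w21, w22, w22', w7] <;> norm_num

lemma g_7_7 : B w8 w8 = -2 := by
  simp [w8] <;> norm_num

lemma g_7_8 : B w8 w9 = 0 := by
  simp [w8, w9] <;> norm_num

lemma g_7_9 : B w8 w10 = 0 := by
  simp [w10, w8] <;> norm_num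

lemma g_7_10 : B w8 w11 = 0 := by
  simp [w11, w8] <;> norm_num

lemma g_7_11 : B w8 w12 = 0 := by
  simp [w12, w8] <;> norm_num

lemma g_7_12 : B w8 w13 = 0 := by
  simp [w13, w8] <;> norm_num

lemma g_7_13 : B w8 w14 = 0 := by
  simp [w14, w8] <;> norm_num

lemma g_7_14 : B w8 w15 = 0 := by
  simp [w15, w8] <;> norm_num

lemma g_7_15 : B w8 w16 = 0 := by
  simp [w16, w8] <;> norm_num

lemma g_7_16 : B w8 w17 = 0 := by
  simp [w17, w8] <;> norm_num

lemma g_7_17 : B w8 w18 = 0 := by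
  simp [w17, w18, w18', w8] <;> norm_num

lemma g_7_18 : B w8 w19 = 0 := by
  simp [w19, w8] <;> norm_num

lemma g_7_19 : B w8 w20 = 0 := by
  simp [w17, w19, w20, w20', w8] <;> norm_num

lemma g_7_20 : B w8 w21 = 0 := by
  simp [w21, w8] <;> norm_num

lemma g_7_21 : B w8 w22 = 0 := by
  simp [w17, w19, w21, w22, w22', w8] <;> norm_num

lemma g_8_8 : B w9 w9 = -2 := by
  simp [w9] <;> norm_num

lemma g_8_9 : B w9 w10 = 0 := by
  simp [w10, w9] <;> norm_num

lemma g_8_10 : B w9 w11 = 1 := by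
  simp [w11, w9] <;> norm_num

lemma g_8_11 : B w9 w12 = 0 := by
  simp [w12, w9] <;> norm_num

lemma g_8_12 : B w9 w13 = 0 := by
  simp [w13, w9] <;> norm_num

lemma g_8_13 : B w9 w14 = 0 := by
  simp [w14, w9] <;> norm_num

lemma g_8_14 : B w9 w15 = 0 := by
  simp [w15, w9] <;> norm_num

lemma g_8_15 : B w9 w16 = 0 := by
  simp [w16, w9] <;> norm_num

lemma g_8_16 : B w9 w17 = 0 := by
  simp [w17, w9] <;> norm_num

lemma g_8_17 : B w9 w18 = 0 := by
  simp [w17, w18, w18', w9] <;> norm_num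

lemma g_8_18 : B w9 w19 = 0 := by
  simp [w19, w9] <;> norm_num

lemma g_8_19 : B w9 w20 = 0 := by
  simp [w17, w19, w20, w20', w9] <;> norm_num

lemma g_8_20 : B w9 w21 = 0 := by
  simp [w21, w9] <;> norm_num

lemma g_8_21 : B w9 w22 = 0 := by
  simp [w17, w19, w21, w22, w22', w9] <;> norm_num

lemma g_9_9 : B w10 w10 = -2 := by
  simp [w10] <;> norm_num

lemma g_9_10 : B w10 w11 = 0 := by
  simp [w10, w11] <;> norm_num

lemma g_9_11 : B w10 w12 = 1 := by
  simp [w10, w12] <;> norm_num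

lemma g_9_12 : B w10 w13 = 0 := by
  simp [w10, w13] <;> norm_num

lemma g_9_13 : B w10 w14 = 0 := by
  simp [w10, w14] <;> norm_num

lemma g_9_14 : B w10 w15 = 0 := by
  simp [w10, w15] <;> norm_num

lemma g_9_15 : B w10 w16 = 0 := by
  simp [w10, w16] <;> norm_num

lemma g_9_16 : B w10 w17 = 0 := by
  simp [w10, w17] <;> norm_num

lemma g_9_17 : B w10 w18 = 0 := by
  simp [w10, w17, w18, w18'] <;> norm_num

lemma g_9_18 : B w10 w19 = 0 := by
  simp [w10, w19] <;> norm_num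

lemma g_9_19 : B w10 w20 = 0 := by
  simp [w10, w17, w19, w20, w20'] <;> norm_num

lemma g_9_20 : B w10 w21 = 0 := by
  simp [w10, w21] <;> norm_num

lemma g_9_21 : B w10 w22 = 0 := by
  simp [w10, w17, w19, w21, w22, w22'] <;> norm_num

lemma g_10_10 : B w11 w11 = -2 := by
  simp [w11] <;> norm_num

lemma g_10_11 : B w11 w12 = 1 := by
  simp [w11, w12] <;> norm_num

lemma g_10_12 : B w11 w13 = 0 := by
  simp [w11, w13] <;> norm_num

lemma g_10_13 : B w11 w14 = 0 := by
  simp [w11, w14] <;> norm_num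

lemma g_10_14 : B w11 w15 = 0 := by
  simp [w11, w15] <;> norm_num

lemma g_10_15 : B w11 w16 = 0 := by
  simp [w11, w16] <;> norm_num

lemma g_10_16 : B w11 w17 = 0 := by
  simp [w11, w17] <;> norm_num

lemma g_10_17 : B w11 w18 = 0 := by
  simp [w11, w17, w18, w18'] <;> norm_num

lemma g_10_18 : B w11 w19 = 0 := by
  simp [w11, w19] <;> norm_num

lemma g_10_19 : B w11 w20 = 0 := by
  simp [w11, w17, w19, w20, w20'] <;> norm_num

lemma g_10_20 : B w11 w21 = 0 := by
  simp [w11, w21] <;> norm_num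

lemma g_10_21 : B w11 w22 = 0 := by
  simp [w11, w17, w19, w21, w22, w22'] <;> norm_num

lemma g_11_11 : B w12 w12 = -2 := by
  simp [w12] <;> norm_num

lemma g_11_12 : B w12 w13 = 1 := by
  simp [w12, w13] <;> norm_num

lemma g_11_13 : B w12 w14 = 0 := by
  simp [w12, w14] <;> norm_num

lemma g_11_14 : B w12 w15 = 0 := by
  simp [w12, w15] <;> norm_num

lemma g_11_15 : B w12 w16 = 0 := by
  simp [w12, w16] <;> norm_num

lemma g_11_16 : B w12 w17 = 0 := by
  simp [w12, w17] <;> norm_num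

lemma g_11_17 : B w12 w18 = 0 := by
  simp [w12, w17, w18, w18'] <;> norm_num

lemma g_11_18 : B w12 w19 = 0 := by
  simp [w12, w19] <;> norm_num

lemma g_11_19 : B w12 w20 = 0 := by
  simp [w12, w17, w19, w20, w20'] <;> norm_num

lemma g_11_20 : B w12 w21 = 0 := by
  simp [w12, w21] <;> norm_num

lemma g_11_21 : B w12 w22 = 0 := by
  simp [w12, w17, w19, w21, w22, w22'] <;> norm_num

lemma g_12_12 : B w13 w13 = -2 := by
  simp [w13] <;> norm_num

lemma g_12_13 : B w13 w14 = 1 := by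
  simp [w13, w14] <;> norm_num

lemma g_12_14 : B w13 w15 = 0 := by
  simp [w13, w15] <;> norm_num

lemma g_12_15 : B w13 w16 = 0 := by
  simp [w13, w16] <;> norm_num

lemma g_12_16 : B w13 w17 = 0 := by
  simp [w13, w17] <;> norm_num

lemma g_12_17 : B w13 w18 = 0 := by
  simp [w13, w17, w18, w18'] <;> norm_num

lemma g_12_18 : B w13 w19 = 0 := by
  simp [w13, w19] <;> norm_num

lemma g_12_19 : B w13 w20 = 0 := by
  simp [w13, w17, w19, w20, w20'] <;> norm_num

lemma g_12_20 : B w13 w21 = 0 := by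
  simp [w13, w21] <;> norm_num

lemma g_12_21 : B w13 w22 = 0 := by
  simp [w13, w17, w19, w21, w22, w22'] <;> norm_num

lemma g_13_13 : B w14 w14 = -2 := by
  simp [w14] <;> norm_num

lemma g_13_14 : B w14 w15 = 1 := by
  simp [w14, w15] <;> norm_num

lemma g_13_15 : B w14 w16 = 0 := by
  simp [w14, w16] <;> norm_num

lemma g_13_16 : B w14 w17 = 0 := by
  simp [w14, w17] <;> norm_num

lemma g_13_17 : B w14 w18 = 0 := by
  simp [w14, w17, w18, w18'] <;> norm_num

lemma g_13_18 : B w14 w19 = 0 := by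
  simp [w14, w19] <;> norm_num

lemma g_13_19 : B w14 w20 = 0 := by
  simp [w14, w17, w19, w20, w20'] <;> norm_num

lemma g_13_20 : B w14 w21 = 0 := by
  simp [w14, w21] <;> norm_num

lemma g_13_21 : B w14 w22 = 0 := by
  simp [w14, w17, w19, w21, w22, w22'] <;> norm_num

lemma g_14_14 : B w15 w15 = -2 := by
  simp [w15] <;> norm_num

lemma g_14_15 : B w15 w16 = 1 := by
  simp [w15, w16] <;> norm_num

lemma g_14_16 : B w15 w17 = 0 := by
  simp [w15, w17] <;> norm_num

lemma g_14_17 : B w15 w18 = 0 := by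
  simp [w15, w17, w18, w18'] <;> norm_num

lemma g_14_18 : B w15 w19 = 0 := by
  simp [w15, w19] <;> norm_num

lemma g_14_19 : B w15 w20 = 0 := by
  simp [w15, w17, w19, w20, w20'] <;> norm_num

lemma g_14_20 : B w15 w21 = 0 := by
  simp [w15, w21] <;> norm_num

lemma g_14_21 : B w15 w22 = 0 := by
  simp [w15, w17, w19, w21, w22, w22'] <;> norm_num

lemma g_15_15 : B w16 w16 = -2 := by
  simp [w16] <;> norm_num

lemma g_15_16 : B w16 w17 = 0 := by
  simp [w16, w17] <;> norm_num

lemma g_15_17 : B w16 w18 = 0 := by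
  simp [w16, w17, w18, w18'] <;> norm_num

lemma g_15_18 : B w16 w19 = 0 := by
  simp [w16, w19] <;> norm_num

lemma g_15_19 : B w16 w20 = 0 := by
  simp [w16, w17, w19, w20, w20'] <;> norm_num

lemma g_15_20 : B w16 w21 = 0 := by
  simp [w16, w21] <;> norm_num

lemma g_15_21 : B w16 w22 = 0 := by
  simp [w16, w17, w19, w21, w22, w22'] <;> norm_num

lemma g_16_16 : B w17 w17 = 0 := by
  simp [w17] <;> norm_num

lemma g_16_17 : B w17 w18 = 1 := by
  simp [w17, w18, w18'] <;> norm_num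

lemma g_16_18 : B w17 w19 = 0 := by
  simp [w17, w19] <;> norm_num

lemma g_16_19 : B w17 w20 = 0 := by
  simp [w17, w19, w20, w20'] <;> norm_num

lemma g_16_20 : B w17 w21 = 0 := by
  simp [w17, w21] <;> norm_num

lemma g_16_21 : B w17 w22 = 0 := by
  simp [w17, w19, w21, w22, w22'] <;> norm_num

lemma g_17_17 : B w18 w18 = 0 := by
  simp [w17, w18, w18'] <;> norm_num

lemma g_17_18 : B w18 w19 = 0 := by
  simp [w17, w18, w18', w19] <;> norm_num

lemma g_17_19 : B w18 w20 = 0 := by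
  simp [w17, w18, w18', w19, w20, w20'] <;> norm_num

lemma g_17_20 : B w18 w21 = 0 := by
  simp [w17, w18, w18', w21] <;> norm_num

lemma g_17_21 : B w18 w22 = 0 := by
  simp [w17, w18, w18', w19, w21, w22, w22'] <;> norm_num

lemma g_18_18 : B w19 w19 = 0 := by
  simp [w19] <;> norm_num

lemma g_18_19 : B w19 w20 = 1 := by
  simp [w17, w19, w20, w20'] <;> norm_num

lemma g_18_20 : B w19 w21 = 0 := by
  simp [w19, w21] <;> norm_num

lemma g_18_21 : B w19 w22 = 0 := by
  simp [w17, w19, w21, w22, w22'] <;> norm_num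

lemma g_19_19 : B w20 w20 = 0 := by
  simp [w17, w19, w20, w20'] <;> norm_num

lemma g_19_20 : B w20 w21 = 0 := by
  simp [w17, w19, w20, w20', w21] <;> norm_num

lemma g_19_21 : B w20 w22 = 0 := by
  simp [w17, w19, w20, w20', w21, w22, w22'] <;> norm_num

lemma g_20_20 : B w21 w21 = 0 := by
  simp [w21] <;> norm_num

lemma g_20_21 : B w21 w22 = 1 := by
  simp [w17, w19, w21, w22, w22'] <;> norm_num

lemma g_21_21 : B w22 w22 = 0 := by
  simp [w17, w19, w21, w22, w22'] <;> norm_num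

set_option maxHeartbeats 4000000 in
/-- The 22×22 Gram matrix of `w_1,…,w_22` with respect to `B` equals the
block-diagonal matrix `E8(-1) ⊕ E8(-1) ⊕ H ⊕ H ⊕ H`. -/
theorem gram_matrix_w_eq_canonical :
    (Matrix.of fun i j : Fin 22 => B (w i) (w j)) = Qcan := by
  ext i j
  fin_cases i <;> fin_cases j
  · exact g_0_0
  · exact g_0_1
  · exact g_0_2
  · exact g_0_3
  · exact g_0_4
  · exact g_0_5
  · exact g_0_6
  · exact g_0_7
  · exact g_0_8
  · exact g_0_9
  · exact g_0_10
  · exact g_0_11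
  · exact g_0_12
  · exact g_0_13
  · exact g_0_14
  · exact g_0_15
  · exact g_0_16
  · exact g_0_17
  · exact g_0_18
  · exact g_0_19
  · exact g_0_20
  · exact g_0_21
  · exact (B_comm _ _).trans g_0_1
  · exact g_1_1
  · exact g_1_2
  · exact g_1_3
  · exact g_1_4
  · exact g_1_5
  · exact g_1_6
  · exact g_1_7
  · exact g_1_8
  · exact g_1_9
  · exact g_1_10
  · exact g_1_11
  · exact g_1_12
  · exact g_1_13
  · exact g_1_14
  · exact g_1_15
  · exact g_1_16
  · exact g_1_17
  · exact g_1_18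
  · exact g_1_19
  · exact g_1_20
  · exact g_1_21
  · exact (B_comm _ _).trans g_0_2
  · exact (B_comm _ _).trans g_1_2
  · exact g_2_2
  · exact g_2_3
  · exact g_2_4
  · exact g_2_5
  · exact g_2_6
  · exact g_2_7
  · exact g_2_8
  · exact g_2_9
  · exact g_2_10
  · exact g_2_11
  · exact g_2_12
  · exact g_2_13
  · exact g_2_14
  · exact g_2_15
  · exact g_2_16
  · exact g_2_17
  · exact g_2_18
  · exact g_2_19
  · exact g_2_20
  · exact g_2_21
  · exact (B_comm _ _).trans g_0_3
  · exact (B_comm _ _).trans g_1_3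
  · exact (B_comm _ _).trans g_2_3
  · exact g_3_3
  · exact g_3_4
  · exact g_3_5
  · exact g_3_6
  · exact g_3_7
  · exact g_3_8
  · exact g_3_9
  · exact g_3_10
  · exact g_3_11
  · exact g_3_12
  · exact g_3_13
  · exact g_3_14
  · exact g_3_15
  · exact g_3_16
  · exact g_3_17
  · exact g_3_18
  · exact g_3_19
  · exact g_3_20
  · exact g_3_21
  · exact (B_comm _ _).trans g_0_4
  · exact (B_comm _ _).trans g_1_4
  · exact (B_comm _ _).trans g_2_4
  · exact (B_comm _ _).trans g_3_4
  · exact g_4_4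
  · exact g_4_5
  · exact g_4_6
  · exact g_4_7
  · exact g_4_8
  · exact g_4_9
  · exact g_4_10
  · exact g_4_11
  · exact g_4_12
  · exact g_4_13
  · exact g_4_14
  · exact g_4_15
  · exact g_4_16
  · exact g_4_17
  · exact g_4_18
  · exact g_4_19
  · exact g_4_20
  · exact g_4_21
  · exact (B_comm _ _).trans g_0_5
  · exact (B_comm _ _).trans g_1_5
  · exact (B_comm _ _).trans g_2_5
  · exact (B_comm _ _).trans g_3_5
  · exact (B_comm _ _).trans g_4_5
  · exact g_5_5
  · exact g_5_6
  · exact g_5_7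
  · exact g_5_8
  · exact g_5_9
  · exact g_5_10
  · exact g_5_11
  · exact g_5_12
  · exact g_5_13
  · exact g_5_14
  · exact g_5_15
  · exact g_5_16
  · exact g_5_17
  · exact g_5_18
  · exact g_5_19
  · exact g_5_20
  · exact g_5_21
  · exact (B_comm _ _).trans g_0_6
  · exact (B_comm _ _).trans g_1_6
  · exact (B_comm _ _).trans g_2_6
  · exact (B_comm _ _).trans g_3_6
  · exact (B_comm _ _).trans g_4_6
  · exact (B_comm _ _).trans g_5_6
  · exact g_6_6
  · exact g_6_7
  · exact g_6_8
  · exact g_6_9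
  · exact g_6_10
  · exact g_6_11
  · exact g_6_12
  · exact g_6_13
  · exact g_6_14
  · exact g_6_15
  · exact g_6_16
  · exact g_6_17
  · exact g_6_18
  · exact g_6_19
  · exact g_6_20
  · exact g_6_21
  · exact (B_comm _ _).trans g_0_7
  · exact (B_comm _ _).trans g_1_7
  · exact (B_comm _ _).trans g_2_7
  · exact (B_comm _ _).trans g_3_7
  · exact (B_comm _ _).trans g_4_7
  · exact (B_comm _ _).trans g_5_7
  · exact (B_comm _ _).trans g_6_7
  · exact g_7_7
  · exact g_7_8
  · exact g_7_9
  · exact g_7_10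
  · exact g_7_11
  · exact g_7_12
  · exact g_7_13
  · exact g_7_14
  · exact g_7_15
  · exact g_7_16
  · exact g_7_17
  · exact g_7_18
  · exact g_7_19
  · exact g_7_20
  · exact g_7_21
  · exact (B_comm _ _).trans g_0_8
  · exact (B_comm _ _).trans g_1_8
  · exact (B_comm _ _).trans g_2_8
  · exact (B_comm _ _).trans g_3_8
  · exact (B_comm _ _).trans g_4_8
  · exact (B_comm _ _).trans g_5_8
  · exact (B_comm _ _).trans g_6_8
  · exact (B_comm _ _).trans g_7_8
  · exact g_8_8
  · exact g_8_9
  · exact g_8_10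
  · exact g_8_11
  · exact g_8_12
  · exact g_8_13
  · exact g_8_14
  · exact g_8_15
  · exact g_8_16
  · exact g_8_17
  · exact g_8_18
  · exact g_8_19
  · exact g_8_20
  · exact g_8_21
  · exact (B_comm _ _).trans g_0_9
  · exact (B_comm _ _).trans g_1_9
  · exact (B_comm _ _).trans g_2_9
  · exact (B_comm _ _).trans g_3_9
  · exact (B_comm _ _).trans g_4_9
  · exact (B_comm _ _).trans g_5_9
  · exact (B_comm _ _).trans g_6_9
  · exact (B_comm _ _).trans g_7_9
  · exact (B_comm _ _).trans g_8_9
  · exact g_9_9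
  · exact g_9_10
  · exact g_9_11
  · exact g_9_12
  · exact g_9_13
  · exact g_9_14
  · exact g_9_15
  · exact g_9_16
  · exact g_9_17
  · exact g_9_18
  · exact g_9_19
  · exact g_9_20
  · exact g_9_21
  · exact (B_comm _ _).trans g_0_10
  · exact (B_comm _ _).trans g_1_10
  · exact (B_comm _ _).trans g_2_10
  · exact (B_comm _ _).trans g_3_10
  · exact (B_comm _ _).trans g_4_10
  · exact (B_comm _ _).trans g_5_10
  · exact (B_comm _ _).trans g_6_10
  · exact (B_comm _ _).trans g_7_10
  · exact (B_comm _ _).trans g_8_10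
  · exact (B_comm _ _).trans g_9_10
  · exact g_10_10
  · exact g_10_11
  · exact g_10_12
  · exact g_10_13
  · exact g_10_14
  · exact g_10_15
  · exact g_10_16
  · exact g_10_17
  · exact g_10_18
  · exact g_10_19
  · exact g_10_20
  · exact g_10_21
  · exact (B_comm _ _).trans g_0_11
  · exact (B_comm _ _).trans g_1_11
  · exact (B_comm _ _).trans g_2_11
  · exact (B_comm _ _).trans g_3_11
  · exact (B_comm _ _).trans g_4_11
  · exact (B_comm _ _).trans g_5_11
  · exact (B_comm _ _).trans g_6_11
  · exact (B_comm _ _).trans g_7_11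
  · exact (B_comm _ _).trans g_8_11
  · exact (B_comm _ _).trans g_9_11
  · exact (B_comm _ _).trans g_10_11
  · exact g_11_11
  · exact g_11_12
  · exact g_11_13
  · exact g_11_14
  · exact g_11_15
  · exact g_11_16
  · exact g_11_17
  · exact g_11_18
  · exact g_11_19
  · exact g_11_20
  · exact g_11_21
  · exact (B_comm _ _).trans g_0_12
  · exact (B_comm _ _).trans g_1_12
  · exact (B_comm _ _).trans g_2_12
  · exact (B_comm _ _).trans g_3_12
  · exact (B_comm _ _).trans g_4_12
  · exact (B_comm _ _).trans g_5_12
  · exact (B_comm _ _).trans g_6_12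
  · exact (B_comm _ _).trans g_7_12
  · exact (B_comm _ _).trans g_8_12
  · exact (B_comm _ _).trans g_9_12
  · exact (B_comm _ _).trans g_10_12
  · exact (B_comm _ _).trans g_11_12
  · exact g_12_12
  · exact g_12_13
  · exact g_12_14
  · exact g_12_15
  · exact g_12_16
  · exact g_12_17
  · exact g_12_18
  · exact g_12_19
  · exact g_12_20
  · exact g_12_21
  · exact (B_comm _ _).trans g_0_13
  · exact (B_comm _ _).trans g_1_13
  · exact (B_comm _ _).trans g_2_13
  · exact (B_comm _ _).trans g_3_13
  · exact (B_comm _ _).trans g_4_13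
  · exact (B_comm _ _).trans g_5_13
  · exact (B_comm _ _).trans g_6_13
  · exact (B_comm _ _).trans g_7_13
  · exact (B_comm _ _).trans g_8_13
  · exact (B_comm _ _).trans g_9_13
  · exact (B_comm _ _).trans g_10_13
  · exact (B_comm _ _).trans g_11_13
  · exact (B_comm _ _).trans g_12_13
  · exact g_13_13
  · exact g_13_14
  · exact g_13_15
  · exact g_13_16
  · exact g_13_17
  · exact g_13_18
  · exact g_13_19
  · exact g_13_20
  · exact g_13_21
  · exact (B_comm _ _).trans g_0_14
  · exact (B_comm _ _).trans g_1_14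
  · exact (B_comm _ _).trans g_2_14
  · exact (B_comm _ _).trans g_3_14
  · exact (B_comm _ _).trans g_4_14
  · exact (B_comm _ _).trans g_5_14
  · exact (B_comm _ _).trans g_6_14
  · exact (B_comm _ _).trans g_7_14
  · exact (B_comm _ _).trans g_8_14
  · exact (B_comm _ _).trans g_9_14
  · exact (B_comm _ _).trans g_10_14
  · exact (B_comm _ _).trans g_11_14
  · exact (B_comm _ _).trans g_12_14
  · exact (B_comm _ _).trans g_13_14
  · exact g_14_14
  · exact g_14_15
  · exact g_14_16
  · exact g_14_17
  · exact g_14_18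
  · exact g_14_19
  · exact g_14_20
  · exact g_14_21
  · exact (B_comm _ _).trans g_0_15
  · exact (B_comm _ _).trans g_1_15
  · exact (B_comm _ _).trans g_2_15
  · exact (B_comm _ _).trans g_3_15
  · exact (B_comm _ _).trans g_4_15
  · exact (B_comm _ _).trans g_5_15
  · exact (B_comm _ _).trans g_6_15
  · exact (B_comm _ _).trans g_7_15
  · exact (B_comm _ _).trans g_8_15
  · exact (B_comm _ _).trans g_9_15
  · exact (B_comm _ _).trans g_10_15
  · exact (B_comm _ _).trans g_11_15
  · exact (B_comm _ _).trans g_12_15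
  · exact (B_comm _ _).trans g_13_15
  · exact (B_comm _ _).trans g_14_15
  · exact g_15_15
  · exact g_15_16
  · exact g_15_17
  · exact g_15_18
  · exact g_15_19
  · exact g_15_20
  · exact g_15_21
  · exact (B_comm _ _).trans g_0_16
  · exact (B_comm _ _).trans g_1_16
  · exact (B_comm _ _).trans g_2_16
  · exact (B_comm _ _).trans g_3_16
  · exact (B_comm _ _).trans g_4_16
  · exact (B_comm _ _).trans g_5_16
  · exact (B_comm _ _).trans g_6_16
  · exact (B_comm _ _).trans g_7_16
  · exact (B_comm _ _).trans g_8_16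
  · exact (B_comm _ _).trans g_9_16
  · exact (B_comm _ _).trans g_10_16
  · exact (B_comm _ _).trans g_11_16
  · exact (B_comm _ _).trans g_12_16
  · exact (B_comm _ _).trans g_13_16
  · exact (B_comm _ _).trans g_14_16
  · exact (B_comm _ _).trans g_15_16
  · exact g_16_16
  · exact g_16_17
  · exact g_16_18
  · exact g_16_19
  · exact g_16_20
  · exact g_16_21
  · exact (B_comm _ _).trans g_0_17
  · exact (B_comm _ _).trans g_1_17
  · exact (B_comm _ _).trans g_2_17
  · exact (B_comm _ _).trans g_3_17
  · exact (B_comm _ _).trans g_4_17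
  · exact (B_comm _ _).trans g_5_17
  · exact (B_comm _ _).trans g_6_17
  · exact (B_comm _ _).trans g_7_17
  · exact (B_comm _ _).trans g_8_17
  · exact (B_comm _ _).trans g_9_17
  · exact (B_comm _ _).trans g_10_17
  · exact (B_comm _ _).trans g_11_17
  · exact (B_comm _ _).trans g_12_17
  · exact (B_comm _ _).trans g_13_17
  · exact (B_comm _ _).trans g_14_17
  · exact (B_comm _ _).trans g_15_17
  · exact (B_comm _ _).trans g_16_17
  · exact g_17_17
  · exact g_17_18
  · exact g_17_19
  · exact g_17_20
  · exact g_17_21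
  · exact (B_comm _ _).trans g_0_18
  · exact (B_comm _ _).trans g_1_18
  · exact (B_comm _ _).trans g_2_18
  · exact (B_comm _ _).trans g_3_18
  · exact (B_comm _ _).trans g_4_18
  · exact (B_comm _ _).trans g_5_18
  · exact (B_comm _ _).trans g_6_18
  · exact (B_comm _ _).trans g_7_18
  · exact (B_comm _ _).trans g_8_18
  · exact (B_comm _ _).trans g_9_18
  · exact (B_comm _ _).trans g_10_18
  · exact (B_comm _ _).trans g_11_18
  · exact (B_comm _ _).trans g_12_18
  · exact (B_comm _ _).trans g_13_18
  · exact (B_comm _ _).trans g_14_18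
  · exact (B_comm _ _).trans g_15_18
  · exact (B_comm _ _).trans g_16_18
  · exact (B_comm _ _).trans g_17_18
  · exact g_18_18
  · exact g_18_19
  · exact g_18_20
  · exact g_18_21
  · exact (B_comm _ _).trans g_0_19
  · exact (B_comm _ _).trans g_1_19
  · exact (B_comm _ _).trans g_2_19
  · exact (B_comm _ _).trans g_3_19
  · exact (B_comm _ _).trans g_4_19
  · exact (B_comm _ _).trans g_5_19
  · exact (B_comm _ _).trans g_6_19
  · exact (B_comm _ _).trans g_7_19
  · exact (B_comm _ _).trans g_8_19
  · exact (B_comm _ _).trans g_9_19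
  · exact (B_comm _ _).trans g_10_19
  · exact (B_comm _ _).trans g_11_19
  · exact (B_comm _ _).trans g_12_19
  · exact (B_comm _ _).trans g_13_19
  · exact (B_comm _ _).trans g_14_19
  · exact (B_comm _ _).trans g_15_19
  · exact (B_comm _ _).trans g_16_19
  · exact (B_comm _ _).trans g_17_19
  · exact (B_comm _ _).trans g_18_19
  · exact g_19_19
  · exact g_19_20
  · exact g_19_21
  · exact (B_comm _ _).trans g_0_20
  · exact (B_comm _ _).trans g_1_20
  · exact (B_comm _ _).trans g_2_20
  · exact (B_comm _ _).trans g_3_20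
  · exact (B_comm _ _).trans g_4_20
  · exact (B_comm _ _).trans g_5_20
  · exact (B_comm _ _).trans g_6_20
  · exact (B_comm _ _).trans g_7_20
  · exact (B_comm _ _).trans g_8_20
  · exact (B_comm _ _).trans g_9_20
  · exact (B_comm _ _).trans g_10_20
  · exact (B_comm _ _).trans g_11_20
  · exact (B_comm _ _).trans g_12_20
  · exact (B_comm _ _).trans g_13_20
  · exact (B_comm _ _).trans g_14_20
  · exact (B_comm _ _).trans g_15_20
  · exact (B_comm _ _).trans g_16_20
  · exact (B_comm _ _).trans g_17_20
  · exact (B_comm _ _).trans g_18_20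
  · exact (B_comm _ _).trans g_19_20
  · exact g_20_20
  · exact g_20_21
  · exact (B_comm _ _).trans g_0_21
  · exact (B_comm _ _).trans g_1_21
  · exact (B_comm _ _).trans g_2_21
  · exact (B_comm _ _).trans g_3_21
  · exact (B_comm _ _).trans g_4_21
  · exact (B_comm _ _).trans g_5_21
  · exact (B_comm _ _).trans g_6_21
  · exact (B_comm _ _).trans g_7_21
  · exact (B_comm _ _).trans g_8_21
  · exact (B_comm _ _).trans g_9_21
  · exact (B_comm _ _).trans g_10_21
  · exact (B_comm _ _).trans g_11_21
  · exact (B_comm _ _).trans g_12_21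
  · exact (B_comm _ _).trans g_13_21
  · exact (B_comm _ _).trans g_14_21
  · exact (B_comm _ _).trans g_15_21
  · exact (B_comm _ _).trans g_16_21
  · exact (B_comm _ _).trans g_17_21
  · exact (B_comm _ _).trans g_18_21
  · exact (B_comm _ _).trans g_19_21
  · exact (B_comm _ _).trans g_20_21
  · exact g_21_21
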